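/- Let d ≥ 1 and (r_μ, s_μ)_{μ=1}^d positive integers with r₁/s₁ ≥ ... ≥ r_d/s_d. Fix λ, μ ∈ {1,...,d} and i ∈ {1,...,Σ r_ν} with Σ_{ν<λ} r_ν < i ≤ Σ_{ν≤λ} r_ν, and write i′ = i − Σ_{ν<λ} r_ν. Define 𝔭_μ(i) = s_μ(1 − i + Σ_{ν<μ} r_ν) + r_μ(1 + ⌊s_λ(i′−1)/r_λ⌋ + Σ_{ν<λ} s_ν − Σ_{ν<μ} s_ν − [λ > 1]·[i′=1]). Then 𝔭_μ(i) ≥ 0. -/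
import Mathlib


open Finset

set_option maxHeartbeats 1000000 in
/-- nonnegativity of
`𝔭_μ(i) = s_μ(1 - i + ∑_{ν<μ} r_ν) + r_μ(1 + ⌊s_λ(i'-1)/r_λ⌋ + ∑_{ν<λ} s_ν - ∑_{ν<μ} s_ν
  - [λ>1][i'=1])`. -/
theorem p_mu_nonneg (d : ℕ) (hd : 1 ≤ d) (r s : ℕ → ℕ)
    (hpos : ∀ μ ∈ Finset.Icc 1 d, 0 < r μ ∧ 0 < s μ)
    (hord : ∀ μ ν, 1 ≤ μ → μ ≤ ν → ν ≤ d → r ν * s μ ≤ r μ * s ν)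
    (lam μ : ℕ) (hlam : lam ∈ Finset.Icc 1 d) (hμ : μ ∈ Finset.Icc 1 d)
    (i i' : ℕ)
    (hi1 : ∑ ν ∈ Finset.Icc 1 (lam - 1), r ν < i)
    (hi2 : i ≤ ∑ ν ∈ Finset.Icc 1 lam, r ν)
    (hi' : i' = i - ∑ ν ∈ Finset.Icc 1 (lam - 1), r ν) :
    0 ≤ (s μ : ℤ) * (1 - (i : ℤ) + ∑ ν ∈ Finset.Icc 1 (μ - 1), (r ν : ℤ)) +
        (r μ : ℤ) * (1 + ((s lam * (i' - 1) / r lam : ℕ) : ℤ) +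
          (∑ ν ∈ Finset.Icc 1 (lam - 1), (s ν : ℤ)) -
          (∑ ν ∈ Finset.Icc 1 (μ - 1), (s ν : ℤ)) -
          (if 1 < lam ∧ i' = 1 then 1 else 0)) := by
  simp only [Finset.mem_Icc] at hlam hμ
  obtain ⟨hlam1, hlamd⟩ := hlam
  obtain ⟨hμ1, hμd⟩ := hμ
  obtain ⟨hrl, hsl⟩ := hpos lam (Finset.mem_Icc.2 ⟨hlam1, hlamd⟩)
  obtain ⟨hrμ, hsμ⟩ := hpos μ (Finset.mem_Icc.2 ⟨hμ1, hμd⟩)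
  -- split sum Icc 1 lam
  have hsplit : ∑ ν ∈ Finset.Icc 1 lam, r ν
      = (∑ ν ∈ Finset.Icc 1 (lam - 1), r ν) + r lam := by
    have : lam = (lam - 1) + 1 := by omega
    rw [this, Finset.sum_Icc_succ_top (by omega)]
    congr 1 <;> omega
  have hi'1 : 1 ≤ i' := by omega
  have hi'le : i' ≤ r lam := by omega
  set F : ℕ := s lam * (i' - 1) / r lam with hF
  set δ : ℤ := if 1 < lam ∧ i' = 1 then 1 else 0 with hδ
  have hδ01 : δ = 0 ∨ δ = 1 := by unfold δ; split <;> simp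
  -- key estimate
  have key : (s lam : ℤ) * ((i' : ℤ) - 1) ≤ (r lam : ℤ) * (1 + F - δ) := by
    rcases eq_or_ne i' 1 with h1 | h1
    · have : F = 0 := by simp [hF, h1]
      rcases hδ01 with h | h <;> rw [this, h] <;> simp [h1] <;> positivity
    · have hδ0 : δ = 0 := by unfold δ; simp [h1]
      have hdm := Nat.div_add_mod (s lam * (i' - 1)) (r lam)
      have hmlt : s lam * (i' - 1) % r lam < r lam := Nat.mod_lt _ hrl
      have hcast : (s lam : ℤ) * ((i':ℤ) - 1) = ((s lam * (i' - 1) : ℕ) : ℤ) := by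
        push_cast [Nat.cast_sub hi'1]; ring
      rw [hδ0, hcast]
      have : ((s lam * (i' - 1) : ℕ) : ℤ) = (r lam : ℤ) * F + ((s lam * (i'-1)) % r lam : ℕ) := by
        exact_mod_cast congrArg (Nat.cast : ℕ → ℤ) hdm.symm
      rw [this]
      have : ((s lam * (i'-1)) % r lam : ℕ) < (r lam : ℤ) := by exact_mod_cast hmlt
      nlinarith [Int.natCast_nonneg (r lam)]
  have hicast : (i : ℤ) = (∑ ν ∈ Finset.Icc 1 (lam - 1), (r ν : ℤ)) + i' := by
    have : (i' : ℤ) = (i : ℤ) - ((∑ ν ∈ Finset.Icc 1 (lam-1), r ν : ℕ) : ℤ) := by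
      rw [hi']; exact_mod_cast Int.ofNat_sub (le_of_lt hi1)
    push_cast at this ⊢
    linarith
  rcases lt_trichotomy μ lam with hlt | heq | hgt
  · -- μ < lam
    have hsum_r : ∑ ν ∈ Finset.Icc 1 (lam-1), (r ν : ℤ)
        = (∑ ν ∈ Finset.Icc 1 (μ-1), (r ν : ℤ)) + ∑ ν ∈ Finset.Ioc (μ-1) (lam-1), (r ν : ℤ) :=
      (Finset.sum_Ioc_consecutive _ (by omega : 0 ≤ μ - 1) (by omega : μ - 1 ≤ lam - 1)).symm
    have hsum_s : ∑ ν ∈ Finset.Icc 1 (lam-1), (s ν : ℤ)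
        = (∑ ν ∈ Finset.Icc 1 (μ-1), (s ν : ℤ)) + ∑ ν ∈ Finset.Ioc (μ-1) (lam-1), (s ν : ℤ) :=
      (Finset.sum_Ioc_consecutive _ (by omega : 0 ≤ μ - 1) (by omega : μ - 1 ≤ lam - 1)).symm
    have hterm : (s μ : ℤ) * ∑ ν ∈ Finset.Ioc (μ-1) (lam-1), (r ν : ℤ)
        ≤ (r μ : ℤ) * ∑ ν ∈ Finset.Ioc (μ-1) (lam-1), (s ν : ℤ) := by
      rw [Finset.mul_sum, Finset.mul_sum]
      apply Finset.sum_le_sum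
      intro ν hν
      simp only [Finset.mem_Ioc] at hν
      have := hord μ ν hμ1 (by omega) (by omega)
      have h' : (r ν : ℤ) * s μ ≤ (r μ : ℤ) * s ν := by exact_mod_cast this
      linarith
    -- r_μ (1+F-δ) ≥ s_μ (i'-1)
    have hkey2 : (s μ : ℤ) * ((i' : ℤ) - 1) ≤ (r μ : ℤ) * (1 + F - δ) := by
      have hord1 := hord μ lam hμ1 (le_of_lt hlt) hlamd
      have hord1' : (r lam : ℤ) * s μ ≤ (r μ : ℤ) * s lam := by exact_mod_cast hord1
      have h1 : (r lam : ℤ) * ((s μ : ℤ) * ((i':ℤ) - 1)) ≤ (r lam : ℤ) * ((r μ : ℤ) * (1 + F - δ)) := by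
        nlinarith [key, (by exact_mod_cast hrl : (0:ℤ) < r lam),
          (by exact_mod_cast hi'1 : (1:ℤ) ≤ (i':ℤ))]
      exact le_of_mul_le_mul_left h1 (by exact_mod_cast hrl)
    rw [hicast, hsum_r, hsum_s]
    linarith
  · -- μ = lam
    subst heq
    rw [hicast]
    linarith
  · -- μ > lam
    have hsum_r : ∑ ν ∈ Finset.Icc 1 (μ-1), (r ν : ℤ)
        = (∑ ν ∈ Finset.Icc 1 (lam-1), (r ν : ℤ)) + ∑ ν ∈ Finset.Ioc (lam-1) (μ-1), (r ν : ℤ) :=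
      (Finset.sum_Ioc_consecutive _ (by omega : 0 ≤ lam - 1) (by omega : lam - 1 ≤ μ - 1)).symm
    have hsum_s : ∑ ν ∈ Finset.Icc 1 (μ-1), (s ν : ℤ)
        = (∑ ν ∈ Finset.Icc 1 (lam-1), (s ν : ℤ)) + ∑ ν ∈ Finset.Ioc (lam-1) (μ-1), (s ν : ℤ) :=
      (Finset.sum_Ioc_consecutive _ (by omega : 0 ≤ lam - 1) (by omega : lam - 1 ≤ μ - 1)).symm
    -- split off ν = lam
    have hsplit2r : ∑ ν ∈ Finset.Ioc (lam-1) (μ-1), (r ν : ℤ)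
        = (r lam : ℤ) + ∑ ν ∈ Finset.Ioc lam (μ-1), (r ν : ℤ) := by
      rw [← Finset.sum_Ioc_consecutive _ (by omega : lam - 1 ≤ lam) (by omega : lam ≤ μ - 1)]
      congr 1
      have : Finset.Ioc (lam-1) lam = {lam} := by
        ext x; simp [Finset.mem_Ioc]; omega
      rw [this, Finset.sum_singleton]
    have hsplit2s : ∑ ν ∈ Finset.Ioc (lam-1) (μ-1), (s ν : ℤ)
        = (s lam : ℤ) + ∑ ν ∈ Finset.Ioc lam (μ-1), (s ν : ℤ) := by
      rw [← Finset.sum_Ioc_consecutive _ (by omega : lam - 1 ≤ lam) (by omega : lam ≤ μ - 1)]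
      congr 1
      have : Finset.Ioc (lam-1) lam = {lam} := by
        ext x; simp [Finset.mem_Ioc]; omega
      rw [this, Finset.sum_singleton]
    have hterm : (r μ : ℤ) * ∑ ν ∈ Finset.Ioc lam (μ-1), (s ν : ℤ)
        ≤ (s μ : ℤ) * ∑ ν ∈ Finset.Ioc lam (μ-1), (r ν : ℤ) := by
      rw [Finset.mul_sum, Finset.mul_sum]
      apply Finset.sum_le_sum
      intro ν hν
      simp only [Finset.mem_Ioc] at hν
      have := hord ν μ (by omega) (by omega) hμd
      have h' : (r μ : ℤ) * s ν ≤ (r ν : ℤ) * s μ := by exact_mod_cast this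
      linarith
    -- main local estimate: s_μ(1-i'+r_λ) + r_μ(1+F-δ-s_λ) ≥ 0
    have hloc : 0 ≤ (s μ : ℤ) * (1 - (i':ℤ) + r lam) + (r μ : ℤ) * (1 + F - δ - s lam) := by
      have hord1 := hord lam μ hlam1 (le_of_lt hgt) hμd
      have hord1' : (r μ : ℤ) * s lam ≤ (r lam : ℤ) * s μ := by exact_mod_cast hord1
      have hrlpos : (0:ℤ) < r lam := by exact_mod_cast hrl
      have h1 : (0:ℤ) ≤ (r lam : ℤ) * ((s μ : ℤ) * (1 - (i':ℤ) + r lam) + (r μ : ℤ) * (1 + F - δ - s lam)) := by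
        nlinarith [key, (by exact_mod_cast hi'le : (i':ℤ) ≤ r lam),
          (by exact_mod_cast hrμ.le : (0:ℤ) ≤ r μ)]
      
      exact nonneg_of_mul_nonneg_right h1 hrlpos
    rw [hicast, hsum_r, hsum_s, hsplit2r, hsplit2s]
    linarith
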